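/- Connes' assignment of a cyclic cochain to a group cochain is well defined on cocycles: if c: Γ^{k+1} → ℂ is a Γ-invariant, antisymmetric group k-cocycle, then τ_c defined by τ_c(γ₀,…,γ_k) = c(1, γ₀, γ₀γ₁, …, γ₀⋯γ_{k−1}) when γ₀⋯γ_k = 1 and τ_c(γ₀,…,γ_k) = 0 otherwise, extended multilinearly to the group algebra ℂΓ, is a cyclic k-cochain: it satisfies the cyclicity condition τ_c(γ₁,…,γ_k,γ₀) = (−1)^k τ_c(γ₀,…,γ_k). -/

import Mathlib

/-! Connes' cyclic cochain `τ_c` associated to a Γ-invariant antisymmetric group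
`k`-cocycle `c`: `τ_c(γ₀,…,γ_k) = c(1, γ₀, γ₀γ₁, …, γ₀⋯γ_{k−1})` if
`γ₀⋯γ_k = 1` and `0` otherwise.  Its multilinear extension to `ℂΓ` is determined
by its values on tuples of group elements, so cyclicity is stated on such
tuples: `τ_c(γ₁,…,γ_k,γ₀) = (−1)^k τ_c(γ₀,…,γ_k)`. -/

/-- Connes' cochain `τ_c` on tuples of group elements.  Note that
`fun i => ((List.ofFn γ).take i).prod` is the tuple `(1, γ₀, γ₀γ₁, …, γ₀⋯γ_{k−1})`. -/
noncomputable def connesCochain {Γ : Type*} [Group Γ] [DecidableEq Γ] (k : ℕ)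
    (c : (Fin (k + 1) → Γ) → ℂ) : (Fin (k + 1) → Γ) → ℂ :=
  fun γ => if (List.ofFn γ).prod = 1
    then c (fun i => ((List.ofFn γ).take (i : ℕ)).prod) else 0

/-- The group-cohomology coboundary on homogeneous cochains (ℂ-valued). -/
noncomputable def groupCoboundary {Γ : Type*} (k : ℕ) (c : (Fin (k + 1) → Γ) → ℂ) :
    (Fin (k + 2) → Γ) → ℂ :=
  fun g => ∑ i : Fin (k + 2), (-1 : ℂ) ^ (i : ℕ) * c (fun j => g (i.succAbove j))

/-- if `c` is a Γ-invariant antisymmetric group `k`-cocycle, then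
`τ_c` is cyclic: `τ_c(γ₁,…,γ_k,γ₀) = (−1)^k τ_c(γ₀,…,γ_k)`. -/
theorem connesCochain_cyclic {Γ : Type*} [Group Γ] [DecidableEq Γ] (k : ℕ)
    (c : (Fin (k + 1) → Γ) → ℂ)
    (hinv : ∀ (g : Γ) (x : Fin (k + 1) → Γ), c (fun j => g * x j) = c x)
    (hanti : ∀ (σ : Equiv.Perm (Fin (k + 1))) (x : Fin (k + 1) → Γ),
      c (x ∘ σ) = ((Equiv.Perm.sign σ : ℤ) : ℂ) * c x)
    (hcocycle : groupCoboundary k c = fun _ => 0)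
    (γ : Fin (k + 1) → Γ) :
    connesCochain k c (fun i => γ (i + 1)) = (-1 : ℂ) ^ k * connesCochain k c γ := by
    classical
  set γ' : Fin (k + 1) → Γ := fun i => γ (i + 1) with hγ'
  have hlen : (List.ofFn γ).length = k + 1 := List.length_ofFn
  have hlen' : (List.ofFn γ').length = k + 1 := List.length_ofFn
  -- partial products of the rotated tuple
  have htake : ∀ n, n ≤ k → ((List.ofFn γ').take n).prod
      = (γ 0)⁻¹ * ((List.ofFn γ).take (n + 1)).prod := by
    intro n hn
    induction n with
    | zero =>
      rw [List.prod_take_succ _ 0 (by omega)]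
      simp [List.getElem_ofFn]
    | succ m ih =>
      have hm : m ≤ k := by omega
      rw [List.prod_take_succ _ m (by omega), List.prod_take_succ _ (m + 1) (by omega),
        ih hm, mul_assoc]
      congr 2
      rw [List.getElem_ofFn, List.getElem_ofFn]
      show γ ((⟨m, by omega⟩ : Fin (k + 1)) + 1) = γ _
      congr 1
      ext
      simp [Fin.add_def, Nat.mod_eq_of_lt (by omega : m + 1 < k + 1)]
  -- products agree up to conjugation
  have hprod : (List.ofFn γ').prod = (γ 0)⁻¹ * (List.ofFn γ).prod * γ 0 := by
    have h1 : (List.ofFn γ').prod = ((List.ofFn γ').take (k + 1)).prod := by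
      rw [List.take_of_length_le (by omega)]
    rw [h1, List.prod_take_succ _ k (by omega), htake k le_rfl, List.getElem_ofFn]
    have h2 : ((List.ofFn γ).take (k + 1)).prod = (List.ofFn γ).prod := by
      rw [List.take_of_length_le (by omega)]
    rw [h2]
    congr 1
    show γ ((⟨k, by omega⟩ : Fin (k + 1)) + 1) = γ 0
    congr 1
    ext
    simp [Fin.add_def]
  have hiff : (List.ofFn γ').prod = 1 ↔ (List.ofFn γ).prod = 1 := by
    rw [hprod]
    constructor
    · intro h
      have := congrArg (fun z => γ 0 * z * (γ 0)⁻¹) h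
      simpa [mul_assoc] using this
    · intro h
      rw [h, mul_one, inv_mul_cancel]
  unfold connesCochain
  by_cases hp : (List.ofFn γ).prod = 1
  · rw [if_pos (hiff.mpr hp), if_pos hp]
    set y : Fin (k + 1) → Γ := fun i => ((List.ofFn γ).take (i : ℕ)).prod with hy
    have key : (fun i : Fin (k + 1) => ((List.ofFn γ').take (i : ℕ)).prod)
        = fun i => (γ 0)⁻¹ * (y ∘ finRotate (k + 1)) i := by
      funext i
      rw [htake i (by omega)]
      congr 1
      simp only [Function.comp_apply, finRotate_succ_apply, hy]
      rcases Nat.lt_or_ge (i : ℕ) k with h | h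
      · congr 2
        simp [Fin.add_def, Fin.val_one, Nat.mod_eq_of_lt (by omega : (i : ℕ) + 1 < k + 1)]
      · have hik : (i : ℕ) = k := by omega
        have h1 : (i + 1 : Fin (k + 1)) = 0 := by
          ext; simp [Fin.add_def, hik]
        rw [h1, hik]
        have h2 : ((List.ofFn γ).take (k + 1)).prod = (List.ofFn γ).prod := by
          rw [List.take_of_length_le (by omega)]
        rw [h2, hp]
        show (1 : Γ) = (List.take 0 (List.ofFn γ)).prod
        simp
    rw [key, hinv ((γ 0)⁻¹) (y ∘ finRotate (k + 1)), hanti (finRotate (k + 1)) y,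
      sign_finRotate]
    push_cast
    ring
  · rw [if_neg (fun h => hp (hiff.mp h)), if_neg hp, mul_zero]
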